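/- Let T be a symmetric linear relation in a Krein space H with canonical decomposition H = H⁻[⊕]H⁺ such that H⁻ ⊆ D_T. Then {(x, P⁻y) : x ∈ H⁻, (x,y) ∈ T^c} = {(x, P⁻y) : x ∈ H⁻, (x,y) ∈ T}, and this set is the graph of an everywhere-defined bounded self-adjoint operator on the Hilbert space H⁻ (whose inner product, inherited from H, equals −[·,·] on H⁻). -/

import Mathlib

open Complex

noncomputable section

variable {H : Type*} [NormedAddCommGroup H] [InnerProductSpace ℂ H] [CompleteSpace H]

/-- Indefinite inner product `[x,y] = ⟪x, J y⟫`. -/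
def kip (J : H →L[ℂ] H) (x y : H) : ℂ := inner ℂ x (J y)

/-- `H⁻ = ker (J + id)`. -/
def negSet (J : H →L[ℂ] H) : Set H := {x | J x = -x}

/-- `H⁺ = ker (J - id)`. -/
def posSet (J : H →L[ℂ] H) : Set H := {x | J x = x}

/-- The canonical projection `P⁻ = (id - J)/2` onto `H⁻`. -/
def Pm (J : H →L[ℂ] H) (x : H) : H := (2⁻¹ : ℂ) • (x - J x)

/-- The canonical projection `P⁺ = (id + J)/2` onto `H⁺`. -/
def Pp (J : H →L[ℂ] H) (x : H) : H := (2⁻¹ : ℂ) • (x + J x)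

/-- `J` is a fundamental symmetry: self-adjoint and an involution. -/
structure IsFundSym (J : H →L[ℂ] H) : Prop where
  symm : ∀ x y : H, (inner ℂ (J x) y : ℂ) = inner ℂ x (J y)
  invol : ∀ x : H, J (J x) = x

def domSet (A : Set (H × H)) : Set H := {x | ∃ y, (x, y) ∈ A}
def ranSet (A : Set (H × H)) : Set H := {y | ∃ x, (x, y) ∈ A}
def mulSet (A : Set (H × H)) : Set H := {y | ((0 : H), y) ∈ A}
def kerl (A : Set (H × H)) (l : ℂ) : Set H := {x | (x, l • x) ∈ A}
def pointSpec (A : Set (H × H)) : Set ℂ := {l | ∃ x : H, x ≠ 0 ∧ (x, l • x) ∈ A}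
/-- The relation `A - l·I`. -/
def shiftRel (A : Set (H × H)) (l : ℂ) : Set (H × H) := {p | ∃ q ∈ A, p = (q.1, q.2 - l • q.1)}
def invRel (A : Set (H × H)) : Set (H × H) := {p | (p.2, p.1) ∈ A}
/-- Composition `A ∘ B` (apply `B` first). -/
def relComp (A B : Set (H × H)) : Set (H × H) := {p | ∃ y, (p.1, y) ∈ B ∧ (y, p.2) ∈ A}
def imageRel (A : Set (H × H)) (M : Set H) : Set H := {y | ∃ x ∈ M, (x, y) ∈ A}
def setSum (A B : Set H) : Set H := {z | ∃ a ∈ A, ∃ b ∈ B, z = a + b}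
/-- The relation `JT = {(x, Jy) : (x,y) ∈ T}`. -/
def JRel (J : H →L[ℂ] H) (A : Set (H × H)) : Set (H × H) := {p | ∃ q ∈ A, p = (q.1, J q.2)}
/-- Krein-space adjoint `T^c`. -/
def adjRel (J : H →L[ℂ] H) (T : Set (H × H)) : Set (H × H) :=
  {q | ∀ p ∈ T, kip J q.2 p.1 = kip J q.1 p.2}
def IsSymRel (J : H →L[ℂ] H) (T : Set (H × H)) : Prop := T ⊆ adjRel J T
def IsDissipative (J : H →L[ℂ] H) (T : Set (H × H)) : Prop := ∀ p ∈ T, 0 ≤ (kip J p.1 p.2).im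
/-- The operator part `T_s = {(x,y) ∈ T : y ⟂ Ind T}`. -/
def opPart (T : Set (H × H)) : Set (H × H) :=
  {p | p ∈ T ∧ ∀ z ∈ mulSet T, (inner ℂ p.2 z : ℂ) = 0}
/-- `‖T_s P⁻‖`: norm of `x ↦ T_s x` as an operator on `H⁻`. -/
def normTsPm (J : H →L[ℂ] H) (T : Set (H × H)) : ℝ :=
  sSup {r | ∃ p ∈ opPart T, p.1 ∈ negSet J ∧ ‖p.1‖ ≤ 1 ∧ r = ‖p.2‖}
/-- `‖P⁻ T_s P⁻‖`: norm of `x ↦ P⁻(T_s x)` as an operator on `H⁻`. -/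
def normPmTsPm (J : H →L[ℂ] H) (T : Set (H × H)) : ℝ :=
  sSup {r | ∃ p ∈ opPart T, p.1 ∈ negSet J ∧ ‖p.1‖ ≤ 1 ∧ r = ‖Pm J p.2‖}
/-- The region `Γ` determined by `m = ‖T_s P⁻‖`, `c = ‖P⁻T_s P⁻‖`. -/
def GammaSet (m c : ℝ) : Set ℂ :=
  {l | l.im ≠ 0 ∧ m < |l.im| ∧
    ‖(if 0 ≤ l.re then (1 : ℂ) else -1) + (c : ℂ) / l‖ < 2 / (1 + (m / |l.im|) ^ 2)}
/-- `C = (ℂ∖ℝ) ∖ Γ`. -/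
def CSet (m c : ℝ) : Set ℂ := {l : ℂ | l.im ≠ 0} \ GammaSet m c

/-- Lemma 2.4 a): `P⁻T^c|H⁻ = P⁻T|H⁻` and it is the graph of a bounded self-adjoint
everywhere-defined operator on the Hilbert space `H⁻ = ker(J + id)`. -/
theorem statement5 (J : H →L[ℂ] H) (hJ : IsFundSym J)
    (T : Submodule ℂ (H × H))
    (hTsym : IsSymRel J (T : Set (H × H)))
    (hdom : negSet J ⊆ domSet (T : Set (H × H))) :
    ({p : H × H | p.1 ∈ negSet J ∧ ∃ y, (p.1, y) ∈ adjRel J (T : Set (H × H)) ∧ p.2 = Pm J y}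
        = {p : H × H | p.1 ∈ negSet J ∧ ∃ y, (p.1, y) ∈ T ∧ p.2 = Pm J y}) ∧
    ∃ A : (LinearMap.ker (((J + 1 : H →L[ℂ] H) : H →ₗ[ℂ] H))) →L[ℂ] (LinearMap.ker (((J + 1 : H →L[ℂ] H) : H →ₗ[ℂ] H))),
      (∀ u v : LinearMap.ker (((J + 1 : H →L[ℂ] H) : H →ₗ[ℂ] H)),
        (inner ℂ ((A u : H)) ((v : H)) : ℂ) = inner ℂ ((u : H)) ((A v : H))) ∧
      {p : H × H | p.1 ∈ negSet J ∧ ∃ y, (p.1, y) ∈ T ∧ p.2 = Pm J y}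
        = {p : H × H | ∃ u : LinearMap.ker (((J + 1 : H →L[ℂ] H) : H →ₗ[ℂ] H)), p = ((u : H), ((A u : H)))} := by
  classical
  -- membership in the kernel vs negSet
  have hmemK : ∀ x : H, x ∈ LinearMap.ker (((J + 1 : H →L[ℂ] H) : H →ₗ[ℂ] H)) ↔ x ∈ negSet J := by
    intro x
    constructor
    · intro h
      have h' : J x + x = 0 := by
        simpa [ContinuousLinearMap.add_apply] using h
      simpa [negSet, eq_neg_iff_add_eq_zero] using h'
    · intro h
      have h' : J x = -x := h
      simp [LinearMap.mem_ker, ContinuousLinearMap.add_apply, h']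
  have hPmneg : ∀ y : H, Pm J y ∈ negSet J := by
    intro y
    show J (Pm J y) = -(Pm J y)
    simp only [Pm, map_smul, map_sub, hJ.invol]
    rw [← neg_sub, smul_neg]
  have hinner : ∀ x ∈ negSet J, ∀ y : H, (inner ℂ x (Pm J y) : ℂ) = inner ℂ x y := by
    intro x hx y
    have hx' : J x = -x := hx
    have h1 : (inner ℂ x (J y) : ℂ) = -(inner ℂ x y) := by
      rw [← hJ.symm, hx', inner_neg_left]
    simp only [Pm, inner_smul_right, inner_sub_right, h1, sub_neg_eq_add]
    rw [← two_smul ℂ (inner ℂ x y : ℂ), smul_eq_mul, ← mul_assoc]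
    norm_num
  have hPmadd : ∀ a b : H, Pm J (a + b) = Pm J a + Pm J b := by
    intro a b
    simp only [Pm, map_add, smul_add, add_sub_add_comm]
  have hPmsub : ∀ a b : H, Pm J (a - b) = Pm J a - Pm J b := by
    intro a b
    simp only [Pm, map_sub, smul_sub, sub_sub_sub_comm]
  have hPmsmul : ∀ (c : ℂ) (a : H), Pm J (c • a) = c • Pm J a := by
    intro c a
    simp only [Pm, map_smul, ← smul_sub]
    rw [smul_comm]
  have hzero : ∀ w : H, ((0 : H), w) ∈ adjRel J (T : Set (H × H)) → Pm J w = 0 := by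
    intro w hw
    have horth : ∀ x ∈ negSet J, (inner ℂ x w : ℂ) = 0 := by
      intro x hx
      obtain ⟨z, hz⟩ := hdom hx
      have hx' : J x = -x := hx
      have h := hw (x, z) hz
      simp only [kip, hx', inner_neg_right, inner_zero_left, neg_eq_zero] at h
      exact inner_eq_zero_symm.mpr h
    have h2 : (inner ℂ (Pm J w) (Pm J w) : ℂ) = 0 := by
      rw [hinner _ (hPmneg w) w]
      exact horth _ (hPmneg w)
    exact inner_self_eq_zero.mp h2
  have hUniq : ∀ x y y' : H, (x, y) ∈ adjRel J (T : Set (H × H)) →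
      (x, y') ∈ (T : Set (H × H)) → Pm J y = Pm J y' := by
    intro x y y' hy hy'
    have h0 : ((0 : H), y - y') ∈ adjRel J (T : Set (H × H)) := by
      intro p hp
      have h1 := hy p hp
      have h2 := hTsym hy' p hp
      simp only [kip, inner_sub_left, inner_zero_left] at h1 h2 ⊢
      rw [h1, h2, sub_self]
    have h3 := hzero _ h0
    rw [hPmsub] at h3
    exact sub_eq_zero.mp h3
  -- choice of images
  have hmem' : ∀ u : (LinearMap.ker (((J + 1 : H →L[ℂ] H) : H →ₗ[ℂ] H))), (u : H) ∈ negSet J :=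
    fun u => (hmemK u).1 u.2
  let f : ∀ x : H, x ∈ negSet J → H := fun x hx => Classical.choose (hdom hx)
  have hf : ∀ x (hx : x ∈ negSet J), (x, f x hx) ∈ (T : Set (H × H)) :=
    fun x hx => Classical.choose_spec (hdom hx)
  let g : (LinearMap.ker (((J + 1 : H →L[ℂ] H) : H →ₗ[ℂ] H))) → (LinearMap.ker (((J + 1 : H →L[ℂ] H) : H →ₗ[ℂ] H))) :=
    fun u => ⟨Pm J (f (u : H) (hmem' u)), (hmemK _).2 (hPmneg _)⟩
  have hg : ∀ (u : (LinearMap.ker (((J + 1 : H →L[ℂ] H) : H →ₗ[ℂ] H)))) (y : H),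
      ((u : H), y) ∈ (T : Set (H × H)) → (g u : H) = Pm J y := by
    intro u y hy
    exact hUniq _ _ _ (hTsym (hf _ (hmem' u))) hy
  let A0 : (LinearMap.ker (((J + 1 : H →L[ℂ] H) : H →ₗ[ℂ] H))) →ₗ[ℂ] (LinearMap.ker (((J + 1 : H →L[ℂ] H) : H →ₗ[ℂ] H))) :=
    { toFun := g
      map_add' := by
        intro u v
        apply Subtype.ext
        have hmemsum : ((↑(u + v) : H), f (u : H) (hmem' u) + f (v : H) (hmem' v))
            ∈ (T : Set (H × H)) := by
          have := T.add_mem (hf _ (hmem' u)) (hf _ (hmem' v))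
          exact this
        rw [Submodule.coe_add]
        calc (↑(g (u + v)) : H) = Pm J (f (u : H) (hmem' u) + f (v : H) (hmem' v)) :=
              hg _ _ hmemsum
          _ = Pm J (f (u : H) (hmem' u)) + Pm J (f (v : H) (hmem' v)) := hPmadd _ _
          _ = ↑(g u) + ↑(g v) := by
              rw [hg u _ (hf _ (hmem' u)), hg v _ (hf _ (hmem' v))]
      map_smul' := by
        intro c u
        apply Subtype.ext
        have hmemsmul : ((↑(c • u) : H), c • f (u : H) (hmem' u)) ∈ (T : Set (H × H)) := by
          have := T.smul_mem c (hf _ (hmem' u))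
          exact this
        rw [RingHom.id_apply, Submodule.coe_smul]
        calc (↑(g (c • u)) : H) = Pm J (c • f (u : H) (hmem' u)) := hg _ _ hmemsmul
          _ = c • Pm J (f (u : H) (hmem' u)) := hPmsmul _ _
          _ = c • ↑(g u) := by rw [hg u _ (hf _ (hmem' u))] }
  have hsymA : ∀ u v : (LinearMap.ker (((J + 1 : H →L[ℂ] H) : H →ₗ[ℂ] H))),
      (inner ℂ ((g u : H)) ((v : H)) : ℂ) = inner ℂ ((u : H)) ((g v : H)) := by
    intro u v
    have hy := hf _ (hmem' u)
    have hz := hf _ (hmem' v)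
    have h := hTsym hy ((v : H), f (v : H) (hmem' v)) hz
    simp only [kip] at h
    have hv' : J (v : H) = -(v : H) := hmem' v
    have hu' : J (u : H) = -(u : H) := hmem' u
    rw [hv'] at h
    rw [← hJ.symm, hu', inner_neg_left, inner_neg_right, neg_inj] at h
    have hl : (inner ℂ ((g u : H)) ((v : H)) : ℂ) = inner ℂ (f (u : H) (hmem' u)) (v : H) := by
      rw [hg u _ hy, ← inner_conj_symm, hinner _ (hmem' v), inner_conj_symm]
    have hr : (inner ℂ ((u : H)) ((g v : H)) : ℂ) = inner ℂ (u : H) (f (v : H) (hmem' v)) := by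
      rw [hg v _ hz, hinner _ (hmem' u)]
    rw [hl, hr, h]
  haveI : CompleteSpace (LinearMap.ker (((J + 1 : H →L[ℂ] H) : H →ₗ[ℂ] H))) :=
    (ContinuousLinearMap.isClosed_ker (J + 1)).completeSpace_coe
  have hsymm : A0.IsSymmetric := by
    intro u v
    exact hsymA u v
  let A : (LinearMap.ker (((J + 1 : H →L[ℂ] H) : H →ₗ[ℂ] H))) →L[ℂ] (LinearMap.ker (((J + 1 : H →L[ℂ] H) : H →ₗ[ℂ] H))) :=
    ⟨A0, hsymm.continuous⟩
  have hAg : ∀ u, A u = g u := fun _ => rfl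
  constructor
  · ext p
    simp only [Set.mem_setOf_eq]
    constructor
    · rintro ⟨hx, y, hy, hp⟩
      exact ⟨hx, f p.1 hx, hf _ hx, by rw [hp, hUniq _ _ _ hy (hf _ hx)]⟩
    · rintro ⟨hx, y, hy, hp⟩
      exact ⟨hx, y, hTsym hy, hp⟩
  · refine ⟨A, hsymA, ?_⟩
    ext p
    simp only [Set.mem_setOf_eq]
    constructor
    · rintro ⟨hx, y, hy, hp⟩
      refine ⟨⟨p.1, (hmemK _).2 hx⟩, ?_⟩
      have h1 : (A ⟨p.1, (hmemK _).2 hx⟩ : H) = Pm J y := hg _ _ hy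
      rw [h1, ← hp]
    · rintro ⟨u, rfl⟩
      exact ⟨hmem' u, f _ (hmem' u), hf _ (hmem' u), (hg u _ (hf _ (hmem' u))).symm⟩
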